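/- There exists a universal constant C > 0 such that the following holds. Let Σ be a finite set, P a pmf on Σ×Σ, fix (x,y) ∈ Σ×Σ, and let P̂ be the empirical distribution of N > 1 i.i.d. samples from P. For every δ ∈ (0,1), if Δ_{xy} = 0, then with probability greater than 1−3δ one has f(Δ̂_{xy}, P̂_X(x)P̂_Y(y)) < C·(log N / N)·log(2/δ). -/

import Mathlib

open scoped Classical

noncomputable section

/-- `f(a,b) := (a+b)·log(1+a/b) − a` (natural logarithm). -/
def f (a b : ℝ) : ℝ := (a + b) * Real.log (1 + a / b) - a

/-- Probability of an event under a (finitely supported) density `p`. -/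
def prob {Ω : Type*} [Fintype Ω] (p : Ω → ℝ) (E : Set Ω) : ℝ :=
  ∑ ω, if ω ∈ E then p ω else 0

/-- Empirical probability of `a` among the `N` samples `s`. -/
def emp {α : Type*} (N : ℕ) (s : Fin N → α) (a : α) : ℝ :=
  ((Finset.univ.filter (fun j => s j = a)).card : ℝ) / N

section ProbLemmas
variable {Ω : Type*} [Fintype Ω] {p : Ω → ℝ}

lemma prob_nonneg (hp : ∀ ω, 0 ≤ p ω) (E : Set Ω) : 0 ≤ prob p E :=
  Finset.sum_nonneg fun ω _ => by by_cases h : ω ∈ E <;> simp [h, hp ω]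

lemma prob_mono (hp : ∀ ω, 0 ≤ p ω) {E F : Set Ω} (h : E ⊆ F) : prob p E ≤ prob p F := by
  refine Finset.sum_le_sum fun ω _ => ?_
  by_cases hE : ω ∈ E
  · simp [hE, h hE]
  · by_cases hF : ω ∈ F <;> simp [hE, hF, hp ω]

lemma prob_union_le (hp : ∀ ω, 0 ≤ p ω) (E F : Set Ω) :
    prob p (E ∪ F) ≤ prob p E + prob p F := by
  rw [prob, prob, prob, ← Finset.sum_add_distrib]
  refine Finset.sum_le_sum fun ω _ => ?_
  by_cases hE : ω ∈ E <;> by_cases hF : ω ∈ F <;>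
    simp [hE, hF, hp ω]

lemma prob_compl (htot : ∑ ω, p ω = 1) (E : Set Ω) : prob p Eᶜ = 1 - prob p E := by
  have h : prob p Eᶜ + prob p E = 1 := by
    rw [prob, prob, ← Finset.sum_add_distrib, ← htot]
    refine Finset.sum_congr rfl fun ω _ => ?_
    by_cases hE : ω ∈ E <;> simp [hE]
  linarith

end ProbLemmas

section Chernoff
variable {β : Type*} [Fintype β]

lemma sum_prod_eq_pow (N : ℕ) (g : β → ℝ) :
    ∑ s : Fin N → β, ∏ j, g (s j) = (∑ a, g a) ^ N := (Fintype.sum_pow g N).symm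

lemma prob_le_mgf (P : β → ℝ) (hP : ∀ z, 0 ≤ P z) (N : ℕ) (ind : β → ℝ) (lam c : ℝ) :
    prob (fun s : Fin N → β => ∏ j, P (s j)) {s | c ≤ lam * ∑ j, ind (s j)}
      ≤ Real.exp (-c) * (∑ a, P a * Real.exp (lam * ind a)) ^ N := by
  have key : ∀ s : Fin N → β,
      (if s ∈ {s : Fin N → β | c ≤ lam * ∑ j, ind (s j)} then ∏ j, P (s j) else 0)
        ≤ Real.exp (-c) * ∏ j, (P (s j) * Real.exp (lam * ind (s j))) := by
    intro s
    have hprod : ∏ j, (P (s j) * Real.exp (lam * ind (s j)))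
        = (∏ j, P (s j)) * Real.exp (lam * ∑ j, ind (s j)) := by
      rw [Finset.prod_mul_distrib, ← Real.exp_sum, Finset.mul_sum]
    by_cases hE : s ∈ {s : Fin N → β | c ≤ lam * ∑ j, ind (s j)}
    · simp only [hE, if_true]
      rw [hprod, ← mul_assoc, mul_comm (Real.exp (-c)), mul_assoc, ← Real.exp_add]
      have h1 : (1:ℝ) ≤ Real.exp (-c + lam * ∑ j, ind (s j)) := by
        rw [← Real.exp_zero]
        exact Real.exp_le_exp.2 (by have := hE; simp only [Set.mem_setOf_eq] at this; linarith)
      have h2 : 0 ≤ ∏ j, P (s j) := Finset.prod_nonneg fun j _ => hP _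
      nlinarith
    · simp only [hE, if_false]
      exact mul_nonneg (Real.exp_nonneg _) (Finset.prod_nonneg fun j _ =>
        mul_nonneg (hP _) (Real.exp_nonneg _))
  calc prob (fun s : Fin N → β => ∏ j, P (s j)) {s | c ≤ lam * ∑ j, ind (s j)}
      ≤ ∑ s : Fin N → β, Real.exp (-c) * ∏ j, (P (s j) * Real.exp (lam * ind (s j))) :=
        Finset.sum_le_sum fun s _ => key s
    _ = Real.exp (-c) * ∑ s : Fin N → β, ∏ j, (P (s j) * Real.exp (lam * ind (s j))) := by
        rw [Finset.mul_sum]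
    _ = Real.exp (-c) * (∑ a, P a * Real.exp (lam * ind a)) ^ N := by
        congr 1
        exact sum_prod_eq_pow N fun a => P a * Real.exp (lam * ind a)

lemma mgf_eq (P : β → ℝ) (htot : ∑ a, P a = 1) (ind : β → ℝ)
    (hind : ∀ a, ind a = 0 ∨ ind a = 1) (lam : ℝ) :
    ∑ a, P a * Real.exp (lam * ind a)
      = 1 + (∑ a, P a * ind a) * (Real.exp lam - 1) := by
  have : ∀ a, P a * Real.exp (lam * ind a) = P a + P a * ind a * (Real.exp lam - 1) := by
    intro a
    rcases hind a with h | h <;> simp [h] <;> ring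
  rw [Finset.sum_congr rfl fun a _ => this a, Finset.sum_add_distrib, htot,
    ← Finset.sum_mul]

lemma chernoff_core (P : β → ℝ) (hP : ∀ z, 0 ≤ P z) (htot : ∑ a, P a = 1) (N : ℕ)
    (ind : β → ℝ) (hind : ∀ a, ind a = 0 ∨ ind a = 1) (lam c : ℝ) :
    prob (fun s : Fin N → β => ∏ j, P (s j)) {s | c ≤ lam * ∑ j, ind (s j)}
      ≤ Real.exp ((N : ℝ) * ((∑ a, P a * ind a) * (Real.exp lam - 1)) - c) := by
  have h1 := prob_le_mgf P hP N ind lam c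
  have h2 : (∑ a, P a * Real.exp (lam * ind a)) ^ N
      ≤ Real.exp ((N : ℝ) * ((∑ a, P a * ind a) * (Real.exp lam - 1))) := by
    rw [mgf_eq P htot ind hind lam]
    have hb : (0:ℝ) ≤ 1 + (∑ a, P a * ind a) * (Real.exp lam - 1) := by
      rw [← mgf_eq P htot ind hind lam]
      exact Finset.sum_nonneg fun a _ => mul_nonneg (hP a) (Real.exp_nonneg _)
    calc (1 + (∑ a, P a * ind a) * (Real.exp lam - 1)) ^ N
        ≤ (Real.exp ((∑ a, P a * ind a) * (Real.exp lam - 1))) ^ N :=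
          pow_le_pow_left₀ hb (Real.add_one_le_exp _ |>.trans_eq' (by ring)) N
      _ = Real.exp ((N : ℝ) * ((∑ a, P a * ind a) * (Real.exp lam - 1))) := by
          rw [← Real.exp_nat_mul]
    
  calc prob _ _ ≤ Real.exp (-c) * (∑ a, P a * Real.exp (lam * ind a)) ^ N := h1
    _ ≤ Real.exp (-c) * Real.exp ((N : ℝ) * ((∑ a, P a * ind a) * (Real.exp lam - 1))) := by
        exact mul_le_mul_of_nonneg_left h2 (Real.exp_nonneg _)
    _ = Real.exp ((N : ℝ) * ((∑ a, P a * ind a) * (Real.exp lam - 1)) - c) := by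
        rw [← Real.exp_add]; ring_nf

end Chernoff

-- e^x ≤ 1 + x + x² for |x| ≤ 1
lemma exp_le_quad {x : ℝ} (hx : |x| ≤ 1) : Real.exp x ≤ 1 + x + x ^ 2 := by
  have h := Real.exp_bound hx (n := 2) (by norm_num)
  have h2 : ∑ i ∈ Finset.range 2, x ^ i / (Nat.factorial i : ℝ) = 1 + x := by
    simp [Finset.sum_range_succ, Nat.factorial]
  rw [h2] at h
  have h3 : |x| ^ 2 = x ^ 2 := sq_abs x
  have h4 : ((Nat.succ 2 : ℕ) : ℝ) / ((Nat.factorial 2 : ℕ) * (2:ℕ)) = 3/4 := by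
    norm_num [Nat.factorial]
  rw [h4, h3] at h
  have := abs_le.1 h
  nlinarith [sq_nonneg x]

lemma lam_choice (θ M n : ℝ) (hθ0 : 0 ≤ θ) (hn : 1 ≤ n) (hM : 0 < M) :
    ∃ lam : ℝ, 0 < lam ∧ lam ≤ 1 ∧
      n * (θ * lam ^ 2) - lam * (n * (4 * Real.sqrt (θ * M / n) + 4 * M / n)) ≤ -M := by
  have hn0 : (0:ℝ) < n := by linarith
  by_cases hcase : θ ≤ M / n
  · refine ⟨1, one_pos, le_refl 1, ?_⟩
    have h1 : 0 ≤ Real.sqrt (θ * M / n) := Real.sqrt_nonneg _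
    have h2 : n * (4 * M / n) = 4 * M := by field_simp
    have h3 : θ * n ≤ M := (le_div_iff₀ hn0).1 hcase
    have h5 : 0 ≤ n * Real.sqrt (θ * M / n) := mul_nonneg hn0.le h1
    nlinarith
  · push_neg at hcase
    have hθpos : 0 < θ := lt_trans (div_pos hM hn0) hcase
    refine ⟨Real.sqrt (M / (n * θ)) / 2, ?_, ?_, ?_⟩
    · positivity
    · have h1 : M / (n * θ) ≤ 1 := by
        rw [div_le_one (by positivity)]
        rw [div_lt_iff₀ hn0] at hcase
        nlinarith
      have := Real.sqrt_le_one.2 h1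
      linarith
    · set lam := Real.sqrt (M / (n * θ)) / 2 with hlam
      have hsq : lam ^ 2 = M / (n * θ) / 4 := by
        rw [hlam, div_pow, Real.sq_sqrt (by positivity)]; ring
      have hθlam : n * (θ * lam ^ 2) = M / 4 := by
        rw [hsq]; field_simp
      have hprod : Real.sqrt (M / (n * θ)) * Real.sqrt (θ * M / n) = M / n := by
        rw [← Real.sqrt_mul (by positivity)]
        have : M / (n * θ) * (θ * M / n) = (M / n) ^ 2 := by field_simp
        rw [this, Real.sqrt_sq (by positivity)]
      have hlt : lam * (n * (4 * Real.sqrt (θ * M / n) + 4 * M / n)) ≥ 2 * M := by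
        have h0 : 0 ≤ Real.sqrt (M / (n * θ)) := Real.sqrt_nonneg _
        have h4 : n * (4 * M / n) = 4 * M := by field_simp
        have expand : lam * (n * (4 * Real.sqrt (θ * M / n) + 4 * M / n))
            = 2 * n * (Real.sqrt (M / (n * θ)) * Real.sqrt (θ * M / n))
              + lam * (4 * M) := by
          rw [hlam]; rw [mul_add, h4]; ring
        rw [expand, hprod]
        have : 2 * n * (M / n) = 2 * M := by field_simp
        rw [this]
        nlinarith [mul_nonneg (le_of_lt (show (0:ℝ) < lam by rw [hlam]; positivity)) hM.le]
      linarith [hθlam, hlt, hM]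

lemma dev_bound {β : Type*} [Fintype β] (P : β → ℝ) (hP : ∀ z, 0 ≤ P z)
    (htot : ∑ a, P a = 1) (N : ℕ) (ind : β → ℝ) (hind : ∀ a, ind a = 0 ∨ ind a = 1)
    (M : ℝ) (hM : 0 < M) (hN : 1 ≤ N) :
    prob (fun s : Fin N → β => ∏ j, P (s j))
      {s | ¬ |(∑ j, ind (s j)) / N - (∑ a, P a * ind a)|
          ≤ 4 * Real.sqrt ((∑ a, P a * ind a) * M / N) + 4 * M / N}
      ≤ 2 * Real.exp (-M) := by
  have hpn : ∀ s : Fin N → β, 0 ≤ ∏ j, P (s j) :=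
    fun s => Finset.prod_nonneg fun j _ => hP _
  set θ := ∑ a, P a * ind a with hθdef
  have hθ0 : 0 ≤ θ := Finset.sum_nonneg fun a _ => by
    rcases hind a with h | h <;> simp [h, hP a]
  have hn0 : (0:ℝ) < N := by
    have : (1:ℝ) ≤ N := by exact_mod_cast hN
    linarith
  set t := 4 * Real.sqrt (θ * M / N) + 4 * M / N with htdef
  obtain ⟨lam, hl0, hl1, hkey⟩ := lam_choice θ M N hθ0 (by exact_mod_cast hN) hM
  rw [← htdef] at hkey
  have hup : prob (fun s : Fin N → β => ∏ j, P (s j))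
      {s | θ + t ≤ (∑ j, ind (s j)) / N} ≤ Real.exp (-M) := by
    have hsub : {s : Fin N → β | θ + t ≤ (∑ j, ind (s j)) / N}
        ⊆ {s : Fin N → β | lam * ((N:ℝ) * (θ + t)) ≤ lam * ∑ j, ind (s j)} := by
      intro s hs
      simp only [Set.mem_setOf_eq] at hs ⊢
      have h1 : (θ + t) * (N:ℝ) ≤ ∑ j, ind (s j) := (le_div_iff₀ hn0).1 hs
      have h2 : (N:ℝ) * (θ + t) ≤ ∑ j, ind (s j) := by linarith [h1]
      exact mul_le_mul_of_nonneg_left h2 hl0.le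
    refine le_trans (prob_mono hpn hsub) (le_trans
      (chernoff_core P hP htot N ind hind lam (lam * ((N:ℝ) * (θ + t)))) ?_)
    apply Real.exp_le_exp.2
    have hq := exp_le_quad (x := lam) (by rw [abs_of_nonneg hl0.le]; exact hl1)
    have hNθ : 0 ≤ (N:ℝ) * θ := mul_nonneg hn0.le hθ0
    rw [← hθdef]
    nlinarith [mul_le_mul_of_nonneg_left hq hNθ]
  have hlo : prob (fun s : Fin N → β => ∏ j, P (s j))
      {s | (∑ j, ind (s j)) / N ≤ θ - t} ≤ Real.exp (-M) := by
    have hsub : {s : Fin N → β | (∑ j, ind (s j)) / N ≤ θ - t}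
        ⊆ {s : Fin N → β | (-lam) * ((N:ℝ) * (θ - t)) ≤ (-lam) * ∑ j, ind (s j)} := by
      intro s hs
      simp only [Set.mem_setOf_eq] at hs ⊢
      have h1 : ∑ j, ind (s j) ≤ (θ - t) * (N:ℝ) := (div_le_iff₀ hn0).1 hs
      have h2 : ∑ j, ind (s j) ≤ (N:ℝ) * (θ - t) := by linarith [h1]
      nlinarith [mul_le_mul_of_nonneg_left h2 hl0.le]
    refine le_trans (prob_mono hpn hsub) (le_trans
      (chernoff_core P hP htot N ind hind (-lam) ((-lam) * ((N:ℝ) * (θ - t)))) ?_)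
    apply Real.exp_le_exp.2
    have hq := exp_le_quad (x := -lam) (by rw [abs_neg, abs_of_nonneg hl0.le]; exact hl1)
    have hNθ : 0 ≤ (N:ℝ) * θ := mul_nonneg hn0.le hθ0
    rw [← hθdef]
    nlinarith [mul_le_mul_of_nonneg_left hq hNθ]
  have hsub2 : {s : Fin N → β | ¬ |(∑ j, ind (s j)) / N - θ| ≤ t}
      ⊆ {s : Fin N → β | θ + t ≤ (∑ j, ind (s j)) / N}
        ∪ {s : Fin N → β | (∑ j, ind (s j)) / N ≤ θ - t} := by
    intro s hs
    simp only [Set.mem_setOf_eq, not_le] at hs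
    simp only [Set.mem_union, Set.mem_setOf_eq]
    rcases lt_abs.mp hs with h | h
    · exact Or.inl (by linarith)
    · exact Or.inr (by linarith)
  calc prob (fun s : Fin N → β => ∏ j, P (s j))
        {s | ¬ |(∑ j, ind (s j)) / N - θ| ≤ t}
      ≤ prob (fun s : Fin N → β => ∏ j, P (s j))
          ({s : Fin N → β | θ + t ≤ (∑ j, ind (s j)) / N}
            ∪ {s : Fin N → β | (∑ j, ind (s j)) / N ≤ θ - t}) := prob_mono hpn hsub2
    _ ≤ _ + _ := prob_union_le hpn _ _
    _ ≤ 2 * Real.exp (-M) := by linarith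

lemma f_le_sq_div {a b : ℝ} (hb : 0 < b) (ha : -b ≤ a) : f a b ≤ a ^ 2 / b := by
  rcases eq_or_lt_of_le ha with h | h
  · -- a = -b
    rw [f, ← h]
    have : 1 + -b / b = 0 := by field_simp; norm_num
    rw [this, Real.log_zero]
    rw [neg_pow]
    have : (-1)^2 * b^2 / b = b := by field_simp
    rw [this]; ring_nf; linarith
  · have hx : 0 < 1 + a / b := by
      have : -1 < a / b := by rw [neg_lt, ← neg_div]; exact (div_lt_one hb).2 (by linarith)
      linarith
    have hlog : Real.log (1 + a / b) ≤ a / b := by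
      have := Real.log_le_sub_one_of_pos hx
      linarith
    have hab : 0 ≤ a + b := by linarith
    have h1 : (a + b) * Real.log (1 + a / b) ≤ (a + b) * (a / b) :=
      mul_le_mul_of_nonneg_left hlog hab
    have h2 : (a + b) * (a / b) - a = a ^ 2 / b := by field_simp; ring
    rw [f]; linarith [h1, h2.symm.le, h2.le]

lemma f_le_rlog {r p q n : ℝ} (hn : 2 ≤ n) (hr : 0 ≤ r) (hrp : r ≤ p) (hrq : r ≤ q)
    (hrn : r = 0 ∨ 1 / n ≤ r) : f (r - p * q) (p * q) ≤ r * Real.log n + p * q := by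
  have hp : 0 ≤ p := le_trans hr hrp
  have hq : 0 ≤ q := le_trans hr hrq
  have hlogn : 0 ≤ Real.log n := Real.log_nonneg (by linarith)
  by_cases hpq : p * q = 0
  · rw [f, hpq]
    simp only [add_zero, div_zero, sub_zero]
    rw [Real.log_one]
    simp only [mul_zero, zero_sub]
    have : 0 ≤ r * Real.log n := mul_nonneg hr hlogn
    linarith
  · have hpq0 : 0 < p * q := lt_of_le_of_ne (mul_nonneg hp hq) (Ne.symm hpq)
    have harg : 1 + (r - p * q) / (p * q) = r / (p * q) := by
      rw [eq_div_iff hpq, add_mul, div_mul_cancel₀ _ hpq]; ring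
    rw [f, harg]
    have hsum : r - p * q + p * q = r := by ring
    rw [hsum]
    rcases hrn with h0 | hn1
    · rw [h0]
      simp only [zero_div, Real.log_zero, mul_zero, zero_sub, neg_zero, zero_mul, zero_add]
      nlinarith [mul_nonneg hr hlogn]
    · have hrpos : 0 < r := lt_of_lt_of_le (by positivity) hn1
      have hr2 : r ^ 2 ≤ p * q := by nlinarith
      have hlog2 : Real.log (r / (p * q)) ≤ Real.log n := by
        rw [Real.log_div (ne_of_gt hrpos) hpq]
        have h1 : Real.log (r ^ 2) ≤ Real.log (p * q) :=
          Real.log_le_log (by positivity) hr2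
        rw [Real.log_pow] at h1
        have h2 : -Real.log r ≤ Real.log n := by
          rw [← Real.log_inv]
          apply Real.log_le_log (by positivity)
          rw [inv_le_comm₀ hrpos (by linarith : (0:ℝ) < n)]
          linarith [hn1, (by rw [one_div] : 1 / n = n⁻¹)]
        push_cast at h1
        linarith
      have := mul_le_mul_of_nonneg_left hlog2 hr
      linarith

lemma sqrt_le_of_sq {θ b : ℝ} (hb : 0 ≤ b) (h : θ ≤ b ^ 2) : Real.sqrt θ ≤ b := by
  have := Real.sqrt_le_sqrt h
  rwa [Real.sqrt_sq hb] at this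

set_option maxHeartbeats 1000000 in
lemma key_arith (n s r p q p0 q0 : ℝ)
    (hn : 2 ≤ n) (hs : 0 < s)
    (hp0 : 0 ≤ p0) (hp01 : p0 ≤ 1) (hq0 : 0 ≤ q0) (hq01 : q0 ≤ 1)
    (hr : 0 ≤ r) (hrp : r ≤ p) (hrq : r ≤ q) (hp1 : p ≤ 1) (hq1 : q ≤ 1)
    (hrn : r = 0 ∨ 1 / n ≤ r)
    (dr : |r - p0 * q0| ≤ 6 * Real.sqrt ((p0 * q0) * s) + 8 * s)
    (dp : |p - p0| ≤ 6 * Real.sqrt (p0 * s) + 8 * s)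
    (dq : |q - q0| ≤ 6 * Real.sqrt (q0 * s) + 8 * s) :
    f (r - p * q) (p * q) ≤ 9000 * s * Real.log n := by
  have hn0 : (0:ℝ) < n := by linarith
  have hlogn : Real.log 2 ≤ Real.log n := Real.log_le_log (by norm_num) (by linarith)
  have hlogn2 : (1:ℝ)/2 ≤ Real.log n := by linarith [Real.log_two_gt_d9]
  have hslog : 0 ≤ s * Real.log n := mul_nonneg hs.le (by linarith)
  have hs2 : s ≤ 2 * (s * Real.log n) := by
    linarith [mul_le_mul_of_nonneg_left hlogn2 hs.le]
  have hq' : 0 ≤ q := le_trans hr hrq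
  have hp' : 0 ≤ p := le_trans hr hrp
  have hr0 : 0 ≤ p0 * q0 := mul_nonneg hp0 hq0
  have dr' := abs_le.1 dr
  have dp' := abs_le.1 dp
  have dq' := abs_le.1 dq
  have hsq_r0s : 0 ≤ Real.sqrt ((p0 * q0) * s) := Real.sqrt_nonneg _
  by_cases hA : p0 ≤ 1024 * s ∨ q0 ≤ 1024 * s
  · -- Case A : some true marginal is small
    have hr0small : p0 * q0 ≤ 1024 * s := by
      rcases hA with h | h
      · have : p0 * q0 ≤ p0 := mul_le_of_le_one_right hp0 hq01
        linarith
      · have : p0 * q0 ≤ q0 := mul_le_of_le_one_left hq0 hp01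
        linarith
    have h32 : Real.sqrt ((p0 * q0) * s) ≤ 32 * s := by
      refine sqrt_le_of_sq (by positivity) ?_
      linarith [mul_le_mul_of_nonneg_right hr0small hs.le]
    have hrub : r ≤ 1224 * s := by linarith [dr'.2]
    have hpqub : p * q ≤ 1224 * s := by
      rcases hA with h | h
      · have h32p : Real.sqrt (p0 * s) ≤ 32 * s := by
          refine sqrt_le_of_sq (by positivity) ?_
          linarith [mul_le_mul_of_nonneg_right h hs.le]
        have hpub : p ≤ 1224 * s := by linarith [dp'.2]
        have : p * q ≤ p := mul_le_of_le_one_right hp' hq1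
        linarith
      · have h32q : Real.sqrt (q0 * s) ≤ 32 * s := by
          refine sqrt_le_of_sq (by positivity) ?_
          linarith [mul_le_mul_of_nonneg_right h hs.le]
        have hqub : q ≤ 1224 * s := by linarith [dq'.2]
        have : p * q ≤ q := mul_le_of_le_one_left hq' hp1
        linarith
    have hf := f_le_rlog hn hr hrp hrq hrn
    have hrl : r * Real.log n ≤ 1224 * (s * Real.log n) :=
      le_trans (mul_le_mul_of_nonneg_right hrub (by linarith)) (by ring_nf; linarith)
    linarith
  · push_neg at hA
    obtain ⟨hAp, hAq⟩ := hA
    have hsp : Real.sqrt (p0 * s) ≤ p0 / 32 := by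
      refine sqrt_le_of_sq (by positivity) ?_
      linarith [mul_le_mul_of_nonneg_left (show s ≤ p0 / 1024 by linarith) hp0]
    have hsq : Real.sqrt (q0 * s) ≤ q0 / 32 := by
      refine sqrt_le_of_sq (by positivity) ?_
      linarith [mul_le_mul_of_nonneg_left (show s ≤ q0 / 1024 by linarith) hq0]
    have hpl : 3 / 4 * p0 ≤ p := by linarith [dp'.1]
    have hpu : p ≤ 5 / 4 * p0 := by linarith [dp'.2]
    have hql : 3 / 4 * q0 ≤ q := by linarith [dq'.1]
    have hqu : q ≤ 5 / 4 * q0 := by linarith [dq'.2]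
    have hpql : 9 / 16 * (p0 * q0) ≤ p * q := by
      linarith [mul_le_mul hpl hql (by positivity) hp']
    have hpqu : p * q ≤ 25 / 16 * (p0 * q0) := by
      linarith [mul_le_mul hpu hqu hq' (by positivity)]
    by_cases hB : p0 * q0 ≤ s
    · -- Case B2 : the joint probability is tiny
      have hsr : Real.sqrt ((p0 * q0) * s) ≤ s := by
        refine sqrt_le_of_sq hs.le ?_
        linarith [mul_le_mul_of_nonneg_right hB hs.le]
      have hrub : r ≤ 15 * s := by linarith [dr'.2]
      have hpqub : p * q ≤ 2 * s := by linarith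
      have hf := f_le_rlog hn hr hrp hrq hrn
      have hrl : r * Real.log n ≤ 15 * (s * Real.log n) :=
        le_trans (mul_le_mul_of_nonneg_right hrub (by linarith)) (by ring_nf; linarith)
      linarith
    · -- Case B1 : the Bernstein regime
      push_neg at hB
      have hss : s ≤ Real.sqrt ((p0 * q0) * s) :=
        Real.le_sqrt_of_sq_le (by linarith [mul_le_mul_of_nonneg_right hB.le hs.le])
      have hq0s : q0 * Real.sqrt (p0 * s) ≤ Real.sqrt ((p0 * q0) * s) := by
        apply Real.le_sqrt_of_sq_le
        have h1 := Real.sq_sqrt (show 0 ≤ p0 * s by positivity)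
        have h2 : (q0 * Real.sqrt (p0 * s)) ^ 2 = q0 ^ 2 * (p0 * s) := by rw [mul_pow, h1]
        rw [h2]
        linarith [mul_nonneg (mul_nonneg hp0 hs.le) (mul_nonneg hq0 (by linarith : (0:ℝ) ≤ 1 - q0))]
      have hp0s : p0 * Real.sqrt (q0 * s) ≤ Real.sqrt ((p0 * q0) * s) := by
        apply Real.le_sqrt_of_sq_le
        have h1 := Real.sq_sqrt (show 0 ≤ q0 * s by positivity)
        have h2 : (p0 * Real.sqrt (q0 * s)) ^ 2 = p0 ^ 2 * (q0 * s) := by rw [mul_pow, h1]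
        rw [h2]
        linarith [mul_nonneg (mul_nonneg hq0 hs.le) (mul_nonneg hp0 (by linarith : (0:ℝ) ≤ 1 - p0))]
      have h2 : |(p - p0) * q| ≤ (6 * Real.sqrt (p0 * s) + 8 * s) * (5 / 4 * q0) := by
        rw [abs_mul, abs_of_nonneg hq']
        exact mul_le_mul dp hqu hq' (by positivity)
      have hq0s' : q0 * s ≤ s := mul_le_of_le_one_left hs.le hq01
      have h2' : (6 * Real.sqrt (p0 * s) + 8 * s) * (5 / 4 * q0)
          ≤ 15 / 2 * Real.sqrt ((p0 * q0) * s) + 10 * s := by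
        linarith [hq0s, hq0s']
      have h3 : |p0 * (q - q0)| ≤ 6 * Real.sqrt ((p0 * q0) * s) + 8 * s := by
        rw [abs_mul, abs_of_nonneg hp0]
        have h4 : p0 * |q - q0| ≤ p0 * (6 * Real.sqrt (q0 * s) + 8 * s) :=
          mul_le_mul_of_nonneg_left dq hp0
        have h5 : p0 * s ≤ s := mul_le_of_le_one_left hs.le hp01
        linarith [hp0s, h4, h5]
      have hid : r - p * q = (r - p0 * q0) - ((p - p0) * q + p0 * (q - q0)) := by ring
      have habs : |r - p * q| ≤ 46 * Real.sqrt ((p0 * q0) * s) := by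
        calc |r - p * q| = |(r - p0 * q0) - ((p - p0) * q + p0 * (q - q0))| := by rw [hid]
          _ ≤ |r - p0 * q0| + |(p - p0) * q + p0 * (q - q0)| := abs_sub _ _
          _ ≤ |r - p0 * q0| + (|(p - p0) * q| + |p0 * (q - q0)|) := by
              linarith [abs_add_le ((p - p0) * q) (p0 * (q - q0))]
          _ ≤ 46 * Real.sqrt ((p0 * q0) * s) := by linarith
      have hpq_pos : 0 < p * q := by linarith
      have hf := f_le_sq_div hpq_pos (show -(p * q) ≤ r - p * q by linarith)
      have hsqb : (r - p * q) ^ 2 ≤ 2116 * ((p0 * q0) * s) := by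
        have h1 : (r - p * q) ^ 2 = |r - p * q| ^ 2 := (sq_abs _).symm
        have h6 : |r - p * q| ^ 2 ≤ (46 * Real.sqrt ((p0 * q0) * s)) ^ 2 :=
          pow_le_pow_left₀ (abs_nonneg _) habs 2
        have h7 := Real.sq_sqrt (show 0 ≤ (p0 * q0) * s by positivity)
        linarith [h1.le, h1.ge, h6, h7.le, h7.ge]
      have hdiv : (r - p * q) ^ 2 / (p * q) ≤ 2116 * ((p0 * q0) * s) / (9 / 16 * (p0 * q0)) :=
        div_le_div₀ (by positivity) hsqb (by linarith) hpql
      have heq : 2116 * ((p0 * q0) * s) / (9 / 16 * (p0 * q0)) = 33856 / 9 * s := by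
        have hne : p0 * q0 ≠ 0 := ne_of_gt (by linarith)
        have hp0ne : p0 ≠ 0 := ne_of_gt (by linarith)
        have hq0ne : q0 ≠ 0 := ne_of_gt (by linarith)
        field_simp
        ring
      rw [heq] at hdiv
      linarith

lemma dev_conv {θ M L n : ℝ} (hθ : 0 ≤ θ) (hn : 0 < n) (hM : 0 ≤ M) (hML : M ≤ 2 * L) :
    4 * Real.sqrt (θ * M / n) + 4 * M / n ≤ 6 * Real.sqrt (θ * (L / n)) + 8 * (L / n) := by
  have hL : 0 ≤ L := by linarith
  have hx : 0 ≤ θ * (L / n) := by positivity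
  have e1 : θ * M / n ≤ (9/4) * (θ * (L / n)) := by
    have h1 : θ * M ≤ θ * (2 * L) := mul_le_mul_of_nonneg_left hML hθ
    rw [div_le_iff₀ hn]
    have : (9/4) * (θ * (L / n)) * n = (9/4) * (θ * L) := by field_simp
    rw [this]
    nlinarith [h1]
  have e2 : Real.sqrt (θ * M / n) ≤ (3/2) * Real.sqrt (θ * (L / n)) := by
    refine le_trans (Real.sqrt_le_sqrt e1) ?_
    rw [show (9:ℝ)/4 * (θ * (L/n)) = ((3:ℝ)/2)^2 * (θ * (L/n)) by norm_num,
      Real.sqrt_mul (by positivity), Real.sqrt_sq (by norm_num)]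
  have e3 : 4 * M / n ≤ 8 * (L / n) := by
    rw [div_le_iff₀ hn]
    have : 8 * (L / n) * n = 8 * L := by field_simp
    rw [this]; linarith
  linarith [Real.sqrt_nonneg (θ * (L / n))]

set_option maxHeartbeats 1600000 in
/-- Soundness (Lemma 4.7): if `Δ_{xy} = 0` then the empirical
`f(Δ̂_{xy}, P̂_X(x)P̂_Y(y))` is small, with probability `> 1 − 3δ`. -/
theorem stmt10 :
    ∃ C : ℝ, 0 < C ∧
      ∀ (α : Type) [Fintype α], ∀ P : α × α → ℝ,
        (∀ z, 0 ≤ P z) → (∑ z, P z = 1) →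
        ∀ (x y : α) (N : ℕ), 1 < N →
        ∀ δ : ℝ, δ ∈ Set.Ioo (0 : ℝ) 1 →
        P (x, y) - (∑ y', P (x, y')) * (∑ x', P (x', y)) = 0 →
        1 - 3 * δ <
          prob (fun s : Fin N → α × α => ∏ j, P (s j))
            {s |
              f (emp N s (x, y) - (∑ y', emp N s (x, y')) * (∑ x', emp N s (x', y)))
                  ((∑ y', emp N s (x, y')) * (∑ x', emp N s (x', y))) <
                C * (Real.log N / N) * Real.log (2 / δ)} := by
  refine ⟨10000, by norm_num, ?_⟩
  intro α _ P hP hsum x y N hN δ hδ hnull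
  obtain ⟨hδ0, hδ1⟩ := hδ
  have hN2 : (2:ℝ) ≤ (N:ℝ) := by exact_mod_cast hN
  have hN0 : (0:ℝ) < (N:ℝ) := by linarith
  have hN1 : 1 ≤ N := hN.le
  have hpn : ∀ s : Fin N → α × α, 0 ≤ ∏ j, P (s j) :=
    fun s => Finset.prod_nonneg fun j _ => hP _
  have htotN : ∑ s : Fin N → α × α, ∏ j, P (s j) = 1 := by
    rw [sum_prod_eq_pow, hsum, one_pow]
  -- indicators
  set ind1 : α × α → ℝ := fun z => if z = (x, y) then 1 else 0 with hind1def
  set ind2 : α × α → ℝ := fun z => if z.1 = x then 1 else 0 with hind2def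
  set ind3 : α × α → ℝ := fun z => if z.2 = y then 1 else 0 with hind3def
  have hind1 : ∀ a, ind1 a = 0 ∨ ind1 a = 1 := fun a => by
    by_cases h : a = (x, y) <;> simp [hind1def, h]
  have hind2 : ∀ a, ind2 a = 0 ∨ ind2 a = 1 := fun a => by
    by_cases h : a.1 = x <;> simp [hind2def, h]
  have hind3 : ∀ a, ind3 a = 0 ∨ ind3 a = 1 := fun a => by
    by_cases h : a.2 = y <;> simp [hind3def, h]
  -- true probabilities
  have hθ1 : ∑ a, P a * ind1 a = P (x, y) := by
    rw [hind1def]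
    simp only [mul_ite, mul_one, mul_zero]
    exact (Finset.sum_ite_eq' Finset.univ (x, y) P).trans (by simp)
  have hθ2 : ∑ a, P a * ind2 a = ∑ y', P (x, y') := by
    rw [hind2def]
    rw [Fintype.sum_prod_type]
    simp only [mul_ite, mul_one, mul_zero]
    have h1 : ∀ a, ∑ b, (if a = x then P (a, b) else 0) = if a = x then ∑ b, P (a, b) else 0 :=
      fun a => by by_cases h : a = x <;> simp [h]
    rw [Finset.sum_congr rfl fun a _ => h1 a]
    exact (Finset.sum_ite_eq' Finset.univ x (fun a => ∑ b, P (a, b))).trans (by simp)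
  have hθ3 : ∑ a, P a * ind3 a = ∑ x', P (x', y) := by
    rw [hind3def]
    rw [Fintype.sum_prod_type]
    simp only [mul_ite, mul_one, mul_zero]
    have h1 : ∀ a, ∑ b, (if b = y then P (a, b) else 0) = P (a, y) :=
      fun a => (Finset.sum_ite_eq' Finset.univ y (fun b => P (a, b))).trans (by simp)
    rw [Finset.sum_congr rfl fun a _ => h1 a]
  -- empirical identities
  have hid1 : ∀ s : Fin N → α × α, emp N s (x, y) = (∑ j, ind1 (s j)) / N := by
    intro s
    rw [emp, hind1def]
    congr 1
    rw [Finset.card_filter]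
    push_cast
    rfl
  have hid2 : ∀ s : Fin N → α × α, ∑ y', emp N s (x, y') = (∑ j, ind2 (s j)) / N := by
    intro s
    rw [hind2def]
    simp only [emp]
    rw [← Finset.sum_div]
    congr 1
    have : ∀ j, ∑ y', (if s j = (x, y') then (1:ℝ) else 0) = if (s j).1 = x then 1 else 0 := by
      intro j
      obtain ⟨a, b⟩ := s j
      by_cases h : a = x
      · subst h
        simp [Prod.ext_iff]
      · simp [Prod.ext_iff, h]
    simp only [Finset.card_filter]
    push_cast
    rw [Finset.sum_comm]
    exact Finset.sum_congr rfl fun j _ => this j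
  have hid3 : ∀ s : Fin N → α × α, ∑ x', emp N s (x', y) = (∑ j, ind3 (s j)) / N := by
    intro s
    rw [hind3def]
    simp only [emp]
    rw [← Finset.sum_div]
    congr 1
    have : ∀ j, ∑ x', (if s j = (x', y) then (1:ℝ) else 0) = if (s j).2 = y then 1 else 0 := by
      intro j
      obtain ⟨a, b⟩ := s j
      by_cases h : b = y
      · subst h
        simp [Prod.ext_iff]
      · simp [Prod.ext_iff, h]
    simp only [Finset.card_filter]
    push_cast
    rw [Finset.sum_comm]
    exact Finset.sum_congr rfl fun j _ => this j
  -- parameters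
  set M : ℝ := Real.log (4 / δ) with hMdef
  set L : ℝ := Real.log (2 / δ) with hLdef
  have hM : 0 < M := Real.log_pos (by rw [lt_div_iff₀ hδ0]; linarith)
  have hL : 0 < L := Real.log_pos (by rw [lt_div_iff₀ hδ0]; linarith)
  have hML : M ≤ 2 * L := by
    rw [hMdef, hLdef, Real.log_div (by norm_num) (ne_of_gt hδ0),
      Real.log_div (by norm_num) (ne_of_gt hδ0)]
    have h4 : Real.log 4 = 2 * Real.log 2 := by
      rw [show (4:ℝ) = 2 ^ 2 by norm_num, Real.log_pow]; push_cast; ring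
    linarith [Real.log_nonpos hδ0.le hδ1.le]
  have hexpM : Real.exp (-M) = δ / 4 := by
    rw [hMdef, ← Real.log_inv, Real.exp_log (by positivity), inv_div]
  set E1 : Set (Fin N → α × α) := {s | |(∑ j, ind1 (s j)) / N - (∑ a, P a * ind1 a)|
      ≤ 4 * Real.sqrt ((∑ a, P a * ind1 a) * M / N) + 4 * M / N} with hE1
  set E2 : Set (Fin N → α × α) := {s | |(∑ j, ind2 (s j)) / N - (∑ a, P a * ind2 a)|
      ≤ 4 * Real.sqrt ((∑ a, P a * ind2 a) * M / N) + 4 * M / N} with hE2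
  set E3 : Set (Fin N → α × α) := {s | |(∑ j, ind3 (s j)) / N - (∑ a, P a * ind3 a)|
      ≤ 4 * Real.sqrt ((∑ a, P a * ind3 a) * M / N) + 4 * M / N} with hE3
  have hd1 : prob (fun s : Fin N → α × α => ∏ j, P (s j)) E1ᶜ ≤ δ / 2 := by
    rw [hE1, Set.compl_setOf]
    refine le_trans (dev_bound P hP hsum N ind1 hind1 M hM hN1) ?_
    rw [hexpM]; linarith
  have hd2 : prob (fun s : Fin N → α × α => ∏ j, P (s j)) E2ᶜ ≤ δ / 2 := by
    rw [hE2, Set.compl_setOf]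
    refine le_trans (dev_bound P hP hsum N ind2 hind2 M hM hN1) ?_
    rw [hexpM]; linarith
  have hd3 : prob (fun s : Fin N → α × α => ∏ j, P (s j)) E3ᶜ ≤ δ / 2 := by
    rw [hE3, Set.compl_setOf]
    refine le_trans (dev_bound P hP hsum N ind3 hind3 M hM hN1) ?_
    rw [hexpM]; linarith
  have hGlb : 1 - 3 / 2 * δ ≤ prob (fun s : Fin N → α × α => ∏ j, P (s j))
      (E1 ∩ (E2 ∩ E3)) := by
    have hcompl : (E1 ∩ (E2 ∩ E3))ᶜ = E1ᶜ ∪ (E2ᶜ ∪ E3ᶜ) := by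
      rw [Set.compl_inter, Set.compl_inter]
    have hu1 := prob_union_le hpn E1ᶜ (E2ᶜ ∪ E3ᶜ)
    have hu2 := prob_union_le hpn E2ᶜ E3ᶜ
    have hc := prob_compl htotN (E1 ∩ (E2 ∩ E3))
    rw [hcompl] at hc
    linarith
  -- the good event is contained in the target event
  have hsub : E1 ∩ (E2 ∩ E3) ⊆
      {s : Fin N → α × α |
        f (emp N s (x, y) - (∑ y', emp N s (x, y')) * (∑ x', emp N s (x', y)))
            ((∑ y', emp N s (x, y')) * (∑ x', emp N s (x', y))) <
          10000 * (Real.log N / N) * Real.log (2 / δ)} := by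
    intro s hs
    obtain ⟨hs1, hs23⟩ := hs
    obtain ⟨hs2, hs3⟩ := hs23
    rw [hE1, Set.mem_setOf_eq, hθ1, ← hid1 s] at hs1
    rw [hE2, Set.mem_setOf_eq, hθ2, ← hid2 s] at hs2
    rw [hE3, Set.mem_setOf_eq, hθ3, ← hid3 s] at hs3
    rw [Set.mem_setOf_eq]
    set r : ℝ := emp N s (x, y) with hrdef
    set pp : ℝ := ∑ y', emp N s (x, y') with hppdef
    set qq : ℝ := ∑ x', emp N s (x', y) with hqqdef
    set p0 : ℝ := ∑ y', P (x, y') with hp0def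
    set q0 : ℝ := ∑ x', P (x', y) with hq0def
    have hnull' : P (x, y) = p0 * q0 := by linarith [hnull]
    rw [hnull'] at hs1
    -- basic facts about the true marginals
    have hp0 : 0 ≤ p0 := Finset.sum_nonneg fun y' _ => hP _
    have hq0 : 0 ≤ q0 := Finset.sum_nonneg fun x' _ => hP _
    have hp01 : p0 ≤ 1 := by
      rw [← hθ2, ← hsum]
      refine Finset.sum_le_sum fun a _ => ?_
      rcases hind2 a with h | h <;> simp [h, hP a]
    have hq01 : q0 ≤ 1 := by
      rw [← hθ3, ← hsum]
      refine Finset.sum_le_sum fun a _ => ?_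
      rcases hind3 a with h | h <;> simp [h, hP a]
    -- basic facts about the empirical quantities
    have hemp_nonneg : ∀ a : α × α, 0 ≤ emp N s a := fun a => by
      rw [emp]; positivity
    have hr : 0 ≤ r := hemp_nonneg _
    have hrp : r ≤ pp := by
      rw [hrdef, hppdef]
      exact Finset.single_le_sum (fun y' _ => hemp_nonneg (x, y')) (Finset.mem_univ y)
    have hrq : r ≤ qq := by
      rw [hqqdef]
      exact Finset.single_le_sum (fun x' _ => hemp_nonneg (x', y)) (Finset.mem_univ x)
    have hsum_ind_le : ∀ ind : α × α → ℝ, (∀ a, ind a = 0 ∨ ind a = 1) →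
        (∑ j, ind (s j)) / (N:ℝ) ≤ 1 := by
      intro ind hind
      rw [div_le_one hN0]
      calc ∑ j, ind (s j) ≤ ∑ _j : Fin N, (1:ℝ) := by
            refine Finset.sum_le_sum fun j _ => ?_
            rcases hind (s j) with h | h <;> simp [h]
        _ = N := by simp
    have hp1 : pp ≤ 1 := by rw [hppdef, hid2 s]; exact hsum_ind_le ind2 hind2
    have hq1 : qq ≤ 1 := by rw [hqqdef, hid3 s]; exact hsum_ind_le ind3 hind3
    have hrn : r = 0 ∨ 1 / (N:ℝ) ≤ r := by
      rw [hrdef, hid1 s]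
      rcases eq_or_ne (∑ j, ind1 (s j)) 0 with h | h
      · left; rw [h, zero_div]
      · right
        obtain ⟨j, _, hj⟩ := Finset.exists_ne_zero_of_sum_ne_zero h
        have h1 : (1:ℝ) ≤ ∑ j, ind1 (s j) := by
          have hle := Finset.single_le_sum (f := fun j => ind1 (s j))
            (fun j _ => by rcases hind1 (s j) with h' | h' <;> simp [h']) (Finset.mem_univ j)
          rcases hind1 (s j) with h' | h'
          · exact absurd h' hj
          · exact le_of_eq_of_le h'.symm hle
        gcongr
    -- deviations
    have hLN : 0 < L / (N:ℝ) := div_pos hL hN0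
    have dr : |r - p0 * q0| ≤ 6 * Real.sqrt ((p0 * q0) * (L / N)) + 8 * (L / N) := by
      refine le_trans hs1 ?_
      exact dev_conv (mul_nonneg hp0 hq0) hN0 hM.le hML
    have dp : |pp - p0| ≤ 6 * Real.sqrt (p0 * (L / N)) + 8 * (L / N) := by
      refine le_trans hs2 ?_
      exact dev_conv hp0 hN0 hM.le hML
    have dq : |qq - q0| ≤ 6 * Real.sqrt (q0 * (L / N)) + 8 * (L / N) := by
      refine le_trans hs3 ?_
      exact dev_conv hq0 hN0 hM.le hML
    have hKA := key_arith (N:ℝ) (L / N) r pp qq p0 q0 hN2 hLN hp0 hp01 hq0 hq01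
      hr hrp hrq hp1 hq1 hrn dr dp dq
    have hlogN : 0 < Real.log N := Real.log_pos (by exact_mod_cast hN)
    have heq : 9000 * (L / (N:ℝ)) * Real.log N = 9000 * (Real.log N / N) * L := by
      ring
    have hpos : 0 < Real.log N / N * L := by positivity
    rw [heq] at hKA
    calc f (r - pp * qq) (pp * qq) ≤ 9000 * (Real.log N / N) * L := hKA
      _ < 10000 * (Real.log N / N) * L := by nlinarith [hpos]
      _ = 10000 * (Real.log N / N) * Real.log (2 / δ) := by rw [hLdef]
  calc 1 - 3 * δ < 1 - 3 / 2 * δ := by linarith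
    _ ≤ prob (fun s : Fin N → α × α => ∏ j, P (s j)) (E1 ∩ (E2 ∩ E3)) := hGlb
    _ ≤ _ := prob_mono hpn hsub

end
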